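/- Let n ≥ 1 and 1 ≤ k ≤ n. Define σ : 𝔽₂ × 𝔽₂ → Matrix (Fin 2) (Fin 2) ℂ by σ(0,0) = identity, σ(0,1) = [[0,1],[1,0]], σ(1,0) = [[1,0],[0,−1]], σ(1,1) = [[0,−i],[i,0]], and for v ∈ (𝔽₂ × 𝔽₂)ⁿ define M(v) ∈ Matrix (Fin n → Fin 2) (Fin n → Fin 2) ℂ by M(v)(s,t) = Πₖ σ(vₖ)(sₖ, tₖ). Let f₁, …, f_k ∈ (𝔽₂ × 𝔽₂)ⁿ be linearly independent over 𝔽₂ and pairwise isotropic: ω(fᵢ, fⱼ) := Σₗ ((fᵢ)ₗ₁(fⱼ)ₗ₂ + (fⱼ)ₗ₁(fᵢ)ₗ₂) = 0 for all i, j. Let μ₁, …, μ_k ∈ {1, −1} ⊆ ℂ. Then the stabilizer code Q = {x : (Fin n → Fin 2) → ℂ | M(fᵢ).mulVec x = μᵢ • x for all i = 1, …, k} is a ℂ-linear subspace of dimension exactly 2^{n−k}. -/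

import Mathlib

/-- The Pauli matrices `I, X, Z, Y` indexed by `𝔽₂ × 𝔽₂`
(equivalently by `𝔽₄` via `(0,0)=0, (0,1)=ε, (1,0)=ε̄, (1,1)=1`). -/
noncomputable def pauli (a : ZMod 2 × ZMod 2) : Matrix (Fin 2) (Fin 2) ℂ :=
  if a = (0, 0) then 1
  else if a = (0, 1) then !![0, 1; 1, 0]
  else if a = (1, 0) then !![1, 0; 0, -1]
  else !![0, -Complex.I; Complex.I, 0]

/-- The `n`-fold Kronecker product of Pauli matrices,
`M(v)(s,t) = Πₖ σ(vₖ)(sₖ,tₖ)`. -/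
noncomputable def pauliTensor {n : ℕ} (v : Fin n → ZMod 2 × ZMod 2) :
    Matrix (Fin n → Fin 2) (Fin n → Fin 2) ℂ :=
  Matrix.of fun s t => ∏ k, pauli (v k) (s k) (t k)

section PauliLemmas

lemma zmod2_cases (x : ZMod 2) : x = 0 ∨ x = 1 := by revert x; decide

lemma pauli_00 : pauli (0,0) = !![1, 0; 0, 1] := by
  rw [pauli, if_pos rfl, Matrix.one_fin_two]
lemma pauli_01 : pauli (0,1) = !![0, 1; 1, 0] := by
  rw [pauli, if_neg (by decide), if_pos rfl]
lemma pauli_10 : pauli (1,0) = !![1, 0; 0, -1] := by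
  rw [pauli, if_neg (by decide), if_neg (by decide), if_pos rfl]
lemma pauli_11 : pauli (1,1) = !![0, -Complex.I; Complex.I, 0] := by
  rw [pauli, if_neg (by decide), if_neg (by decide), if_neg (by decide)]
lemma pauli_z : pauli 0 = !![1, 0; 0, 1] := pauli_00
lemma pauli_o : pauli 1 = !![0, -Complex.I; Complex.I, 0] := pauli_11

lemma zmod2_11 : (1 : ZMod 2) + 1 = 0 := rfl
lemma zmod2_v0 : (0 : ZMod 2).val = 0 := rfl
lemma zmod2_v1 : (1 : ZMod 2).val = 1 := rfl
lemma zmod2_two : (2 : ZMod 2) = 0 := rfl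
lemma psum1 : ((0:ZMod 2),(1:ZMod 2)) + 1 = ((1:ZMod 2),(0:ZMod 2)) := by decide
lemma psum2 : ((1:ZMod 2),(0:ZMod 2)) + 1 = ((0:ZMod 2),(1:ZMod 2)) := by decide
lemma psum3 : (1:ZMod 2 × ZMod 2) + (0,1) = ((1:ZMod 2),(0:ZMod 2)) := by decide
lemma psum4 : (1:ZMod 2 × ZMod 2) + (1,0) = ((0:ZMod 2),(1:ZMod 2)) := by decide
lemma psum5 : ((0:ZMod 2),(2:ZMod 2)) = 0 := by decide
lemma psum6 : ((2:ZMod 2),(0:ZMod 2)) = 0 := by decide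
lemma psum7 : (2 : ZMod 2 × ZMod 2) = 0 := by decide
lemma psum8 : (1:ZMod 2 × ZMod 2) + 1 = 0 := by decide
lemma zmod2_v2 : (2 : ZMod 2).val = 0 := rfl
lemma pauli_12 : pauli ((1:ZMod 2), (2:ZMod 2)) = !![1, 0; 0, -1] := by
  rw [show ((1:ZMod 2), (2:ZMod 2)) = (1, 0) by decide, pauli_10]
lemma pauli_21 : pauli ((2:ZMod 2), (1:ZMod 2)) = !![0, 1; 1, 0] := by
  rw [show ((2:ZMod 2), (1:ZMod 2)) = (0, 1) by decide, pauli_01]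
lemma pauli_22 : pauli ((2:ZMod 2), (2:ZMod 2)) = !![1, 0; 0, 1] := by
  rw [show ((2:ZMod 2), (2:ZMod 2)) = (0, 0) by decide, pauli_00]

lemma pauli_sq (a : ZMod 2 × ZMod 2) : pauli a * pauli a = 1 := by
  obtain ⟨x, y⟩ := a
  rcases zmod2_cases x with rfl | rfl <;> rcases zmod2_cases y with rfl | rfl <;>
    rw [show (1 : Matrix (Fin 2) (Fin 2) ℂ) = !![1,0;0,1] from Matrix.one_fin_two] <;>
    norm_num [pauli_00, pauli_01, pauli_10, pauli_11, pauli_z, pauli_o,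
      Matrix.mul_fin_two, Complex.I_mul_I]

lemma pauli_comm (a b : ZMod 2 × ZMod 2) :
    pauli a * pauli b = ((-1:ℂ)^((a.1*b.2 + b.1*a.2).val)) • (pauli b * pauli a) := by
  obtain ⟨x, y⟩ := a; obtain ⟨z, w⟩ := b
  rcases zmod2_cases x with rfl | rfl <;> rcases zmod2_cases y with rfl | rfl <;>
    rcases zmod2_cases z with rfl | rfl <;> rcases zmod2_cases w with rfl | rfl <;>
    · norm_num [pauli_00, pauli_01, pauli_10, pauli_11, pauli_z, pauli_o,
        zmod2_11, zmod2_v0, zmod2_v1, zmod2_v2,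
        Matrix.mul_fin_two, Matrix.smul_of, Matrix.smul_cons, Matrix.smul_empty, Complex.I_mul_I]

lemma pauli_mul (a b : ZMod 2 × ZMod 2) : ∃ c : ℂ, pauli a * pauli b = c • pauli (a + b) := by
  obtain ⟨x, y⟩ := a; obtain ⟨z, w⟩ := b
  rcases zmod2_cases x with rfl | rfl <;> rcases zmod2_cases y with rfl | rfl <;>
    rcases zmod2_cases z with rfl | rfl <;> rcases zmod2_cases w with rfl | rfl <;>
    first
      | (refine ⟨(1:ℂ), ?_⟩; norm_num [pauli_00, pauli_01, pauli_10, pauli_11, pauli_z, pauli_o, Prod.mk_add_mk, pauli_12, pauli_21, pauli_22, zmod2_11, zmod2_two, psum1, psum2, psum3, psum4, psum5, psum6, psum7, psum8, Matrix.mul_fin_two, Matrix.smul_of, Matrix.smul_cons, Matrix.smul_empty, Complex.I_mul_I]; done)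
      | (refine ⟨Complex.I, ?_⟩; norm_num [pauli_00, pauli_01, pauli_10, pauli_11, pauli_z, pauli_o, Prod.mk_add_mk, pauli_12, pauli_21, pauli_22, zmod2_11, zmod2_two, psum1, psum2, psum3, psum4, psum5, psum6, psum7, psum8, Matrix.mul_fin_two, Matrix.smul_of, Matrix.smul_cons, Matrix.smul_empty, Complex.I_mul_I]; done)
      | (refine ⟨-Complex.I, ?_⟩; norm_num [pauli_00, pauli_01, pauli_10, pauli_11, pauli_z, pauli_o, Prod.mk_add_mk, pauli_12, pauli_21, pauli_22, zmod2_11, zmod2_two, psum1, psum2, psum3, psum4, psum5, psum6, psum7, psum8, Matrix.mul_fin_two, Matrix.smul_of, Matrix.smul_cons, Matrix.smul_empty, Complex.I_mul_I])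

lemma pauli_trace (a : ZMod 2 × ZMod 2) :
    (pauli a).trace = if a = 0 then 2 else 0 := by
  obtain ⟨x, y⟩ := a
  rcases zmod2_cases x with rfl | rfl <;> rcases zmod2_cases y with rfl | rfl <;>
    norm_num [pauli_00, pauli_01, pauli_10, pauli_11, pauli_z, pauli_o, Matrix.trace_fin_two,
      Prod.ext_iff, show (1:ZMod 2) ≠ 0 by decide]

lemma neg_one_pow_add (a b : ZMod 2) :
    ((-1:ℂ)^a.val) * (-1)^b.val = (-1)^((a+b).val) := by
  rcases zmod2_cases a with rfl | rfl <;> rcases zmod2_cases b with rfl | rfl <;>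
    norm_num [zmod2_v0, zmod2_v1, zmod2_v2]

lemma neg_one_pow_val_sum {ι : Type*} (s : Finset ι) (g : ι → ZMod 2) :
    ∏ i ∈ s, ((-1:ℂ)^(g i).val) = (-1)^((∑ i ∈ s, g i).val) := by
  classical
  induction s using Finset.cons_induction with
  | empty => simp [zmod2_v0]
  | cons a s ha ih => rw [Finset.prod_cons, Finset.sum_cons, ih, neg_one_pow_add]

end PauliLemmas

section TensorLemmas
variable {n : ℕ}

lemma pauliTensor_mul_apply (v w : Fin n → ZMod 2 × ZMod 2) (s t : Fin n → Fin 2) :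
    (pauliTensor v * pauliTensor w) s t = ∏ k, (pauli (v k) * pauli (w k)) (s k) (t k) := by
  rw [Matrix.mul_apply]
  simp only [Matrix.mul_apply, pauliTensor, Matrix.of_apply]
  rw [Finset.prod_univ_sum, Fintype.piFinset_univ]
  exact Finset.sum_congr rfl fun u _ => (Finset.prod_mul_distrib).symm

lemma prod_one_entry (s t : Fin n → Fin 2) :
    ∏ k, (1 : Matrix (Fin 2) (Fin 2) ℂ) (s k) (t k)
      = (1 : Matrix (Fin n → Fin 2) (Fin n → Fin 2) ℂ) s t := by
  simp only [Matrix.one_apply]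
  rw [Finset.prod_boole]
  simp [funext_iff]

lemma pauliTensor_sq (v : Fin n → ZMod 2 × ZMod 2) :
    pauliTensor v * pauliTensor v = 1 := by
  ext s t
  rw [pauliTensor_mul_apply]
  simp only [pauli_sq]
  exact prod_one_entry s t

lemma pauliTensor_trace (v : Fin n → ZMod 2 × ZMod 2) :
    (pauliTensor v).trace = if v = 0 then (2:ℂ)^n else 0 := by
  rw [Matrix.trace]
  simp only [Matrix.diag, pauliTensor, Matrix.of_apply]
  have h1 : ∑ x : Fin n → Fin 2, ∏ k, pauli (v k) (x k) (x k)
      = ∏ k, (pauli (v k)).trace := by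
    simp only [Matrix.trace, Matrix.diag]
    rw [Finset.prod_univ_sum, Fintype.piFinset_univ]
  rw [h1]
  simp only [pauli_trace]
  by_cases hv : v = 0
  · subst hv; simp
  · obtain ⟨k, hk⟩ := Function.ne_iff.mp hv
    rw [if_neg hv]
    exact Finset.prod_eq_zero (Finset.mem_univ k)
      (by simp only [if_neg (by simpa using hk)])

lemma pauliTensor_mul (v w : Fin n → ZMod 2 × ZMod 2) :
    ∃ c : ℂ, pauliTensor v * pauliTensor w = c • pauliTensor (v + w) := by
  choose c hc using fun k => pauli_mul (v k) (w k)
  refine ⟨∏ k, c k, ?_⟩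
  ext s t
  rw [pauliTensor_mul_apply]
  simp only [hc, Matrix.smul_apply, smul_eq_mul]
  rw [Finset.prod_mul_distrib]
  simp [pauliTensor, Pi.add_apply]

lemma pauliTensor_comm (v w : Fin n → ZMod 2 × ZMod 2)
    (h : ∑ l, ((v l).1 * (w l).2 + (w l).1 * (v l).2) = (0 : ZMod 2)) :
    pauliTensor v * pauliTensor w = pauliTensor w * pauliTensor v := by
  ext s t
  rw [pauliTensor_mul_apply, pauliTensor_mul_apply]
  have : ∀ k, (pauli (v k) * pauli (w k)) (s k) (t k)
      = ((-1:ℂ)^(((v k).1 * (w k).2 + (w k).1 * (v k).2)).val)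
        * (pauli (w k) * pauli (v k)) (s k) (t k) := by
    intro k
    rw [pauli_comm (v k) (w k)]
    simp [Matrix.smul_apply]
  simp only [this]
  rw [Finset.prod_mul_distrib, neg_one_pow_val_sum, h]
  simp [zmod2_v0]

end TensorLemmas

section Induction
variable {n k : ℕ} (f : Fin k → (Fin n → ZMod 2 × ZMod 2)) (μ : Fin k → ℂ)

/-- The projector onto the `μ i` eigenspace of `M (f i)`. -/
noncomputable def Pm (i : Fin k) : Matrix (Fin n → Fin 2) (Fin n → Fin 2) ℂ :=
  (2:ℂ)⁻¹ • (1 + μ i • pauliTensor (f i))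

/-- Product of the projectors along a list of indices. -/
noncomputable def Pl (l : List (Fin k)) : Matrix (Fin n → Fin 2) (Fin n → Fin 2) ℂ :=
  (l.map (Pm f μ)).prod

lemma Pl_nil : Pl f μ [] = 1 := rfl
lemma Pl_cons (i : Fin k) (l : List (Fin k)) : Pl f μ (i :: l) = Pm f μ i * Pl f μ l := by
  simp [Pl]

lemma traceA (l : List (Fin k)) :
    ∀ w : Fin n → ZMod 2 × ZMod 2,
      w ∉ Submodule.span (ZMod 2) (f '' {j | j ∈ l}) →
      (pauliTensor w * Pl f μ l).trace = 0 := by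
  induction l with
  | nil =>
    intro w hw
    rw [Pl_nil, mul_one, pauliTensor_trace, if_neg]
    rintro rfl
    exact hw (Submodule.zero_mem _)
  | cons i t ih =>
    intro w hw
    have hsub : (f '' {j | j ∈ t}) ⊆ (f '' {j | j ∈ i :: t}) := by
      apply Set.image_mono; intro j hj; exact List.mem_cons_of_mem i hj
    have hw1 : w ∉ Submodule.span (ZMod 2) (f '' {j | j ∈ t}) :=
      fun h => hw (Submodule.span_mono hsub h)
    have hw2 : w + f i ∉ Submodule.span (ZMod 2) (f '' {j | j ∈ t}) := by
      intro h
      apply hw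
      have hfi : f i ∈ Submodule.span (ZMod 2) (f '' {j | j ∈ i :: t}) :=
        Submodule.subset_span ⟨i, List.mem_cons_self, rfl⟩
      have : (w + f i) - f i ∈ Submodule.span (ZMod 2) (f '' {j | j ∈ i :: t}) :=
        Submodule.sub_mem _ (Submodule.span_mono hsub h) hfi
      simpa using this
    obtain ⟨c, hc⟩ := pauliTensor_mul w (f i)
    have expand : pauliTensor w * Pl f μ (i :: t)
        = (2:ℂ)⁻¹ • (pauliTensor w * Pl f μ t
            + (μ i * c) • (pauliTensor (w + f i) * Pl f μ t)) := by
      rw [Pl_cons, Pm]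
      rw [← mul_assoc]
      rw [Matrix.mul_smul, mul_add, mul_one, Matrix.mul_smul, hc]
      rw [Matrix.smul_mul, add_mul, Matrix.smul_mul, Matrix.smul_mul, smul_smul]
    rw [expand, Matrix.trace_smul, Matrix.trace_add, Matrix.trace_smul, ih w hw1,
      ih (w + f i) hw2]
    simp

lemma traceB (hind : LinearIndependent (ZMod 2) f) (l : List (Fin k)) (hl : l.Nodup) :
    (Pl f μ l).trace = (2:ℂ)^n / 2^l.length := by
  induction l with
  | nil =>
    simp [Pl_nil, Matrix.trace_one]
  | cons i t ih =>
    obtain ⟨hi, ht⟩ := List.nodup_cons.mp hl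
    have hA : (pauliTensor (f i) * Pl f μ t).trace = 0 := by
      apply traceA
      exact hind.notMem_span_image (by simpa using hi)
    have expand : Pl f μ (i :: t)
        = (2:ℂ)⁻¹ • (Pl f μ t + μ i • (pauliTensor (f i) * Pl f μ t)) := by
      rw [Pl_cons, Pm, Matrix.smul_mul, add_mul, one_mul, Matrix.smul_mul]
    rw [expand, Matrix.trace_smul, Matrix.trace_add, Matrix.trace_smul, hA, ih ht]
    simp only [smul_eq_mul, mul_zero, add_zero, List.length_cons]
    rw [pow_succ]
    field_simp

end Induction

section Algebra
variable {n k : ℕ} {f : Fin k → (Fin n → ZMod 2 × ZMod 2)} {μ : Fin k → ℂ}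

lemma commute_aux_left {A : Type*} [Ring A] [Algebra ℂ A] {a b : A} (r c : ℂ)
    (h : Commute a b) : Commute (r • (1 + c • a)) b :=
  ((Commute.one_left b).add_left (h.smul_left c)).smul_left r

lemma commute_aux_right {A : Type*} [Ring A] [Algebra ℂ A] {a b : A} (s d : ℂ)
    (h : Commute a b) : Commute a (s • (1 + d • b)) :=
  ((Commute.one_right a).add_right (h.smul_right d)).smul_right s

lemma Pm_commute (hcomm : ∀ i j, pauliTensor (f i) * pauliTensor (f j)
      = pauliTensor (f j) * pauliTensor (f i)) (i j : Fin k) :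
    Commute (Pm f μ i) (Pm f μ j) := by
  unfold Pm
  exact commute_aux_right _ _ (commute_aux_left _ _ (hcomm i j))

lemma M_commute_Pm (hcomm : ∀ i j, pauliTensor (f i) * pauliTensor (f j)
      = pauliTensor (f j) * pauliTensor (f i)) (i j : Fin k) :
    Commute (pauliTensor (f i)) (Pm f μ j) := by
  unfold Pm
  exact commute_aux_right _ _ (hcomm i j)

lemma M_commute_Pl (hcomm : ∀ i j, pauliTensor (f i) * pauliTensor (f j)
      = pauliTensor (f j) * pauliTensor (f i)) (i : Fin k) (l : List (Fin k)) :
    Commute (pauliTensor (f i)) (Pl f μ l) := by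
  apply Commute.list_prod_right
  intro x hx
  obtain ⟨j, _, rfl⟩ := List.mem_map.mp hx
  exact M_commute_Pm hcomm i j

lemma Pm_commute_Pl (hcomm : ∀ i j, pauliTensor (f i) * pauliTensor (f j)
      = pauliTensor (f j) * pauliTensor (f i)) (i : Fin k) (l : List (Fin k)) :
    Commute (Pm f μ i) (Pl f μ l) := by
  apply Commute.list_prod_right
  intro x hx
  obtain ⟨j, _, rfl⟩ := List.mem_map.mp hx
  exact Pm_commute hcomm i j

lemma M_mul_Pm_self (hμ : ∀ i, μ i = 1 ∨ μ i = -1) (i : Fin k) :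
    pauliTensor (f i) * Pm f μ i = μ i • Pm f μ i := by
  have hμ2 : μ i * μ i = 1 := by rcases hμ i with h | h <;> rw [h] <;> ring
  unfold Pm
  rw [Matrix.mul_smul, mul_add, mul_one, Matrix.mul_smul, pauliTensor_sq]
  conv_rhs => rw [smul_smul, mul_comm, ← smul_smul, smul_add, smul_smul, hμ2, one_smul]
  rw [add_comm]

lemma Pm_idem (hμ : ∀ i, μ i = 1 ∨ μ i = -1) (i : Fin k) :
    Pm f μ i * Pm f μ i = Pm f μ i := by
  have hμ2 : μ i * μ i = 1 := by rcases hμ i with h | h <;> rw [h] <;> ring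
  unfold Pm
  rw [Matrix.smul_mul, Matrix.mul_smul, smul_smul]
  rw [add_mul, one_mul, mul_add, mul_one, Matrix.smul_mul, Matrix.mul_smul, smul_smul,
    pauliTensor_sq, hμ2, one_smul]
  rw [smul_add, smul_add]
  ext s t
  simp [Matrix.add_apply, Matrix.smul_apply]
  ring

lemma Pl_idem (hcomm : ∀ i j, pauliTensor (f i) * pauliTensor (f j)
      = pauliTensor (f j) * pauliTensor (f i))
    (hμ : ∀ i, μ i = 1 ∨ μ i = -1) (l : List (Fin k)) :
    Pl f μ l * Pl f μ l = Pl f μ l := by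
  induction l with
  | nil => rw [Pl_nil, one_mul]
  | cons i t ih =>
    rw [Pl_cons]
    calc Pm f μ i * Pl f μ t * (Pm f μ i * Pl f μ t)
        = Pm f μ i * (Pl f μ t * Pm f μ i) * Pl f μ t := by simp only [mul_assoc]
      _ = Pm f μ i * (Pm f μ i * Pl f μ t) * Pl f μ t := by
          rw [(Pm_commute_Pl hcomm i t).symm.eq]
      _ = (Pm f μ i * Pm f μ i) * (Pl f μ t * Pl f μ t) := by simp only [mul_assoc]
      _ = Pm f μ i * Pl f μ t := by rw [Pm_idem hμ i, ih]

lemma M_mul_Pl (hcomm : ∀ i j, pauliTensor (f i) * pauliTensor (f j)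
      = pauliTensor (f j) * pauliTensor (f i))
    (hμ : ∀ i, μ i = 1 ∨ μ i = -1) (i : Fin k) (l : List (Fin k)) (hil : i ∈ l) :
    pauliTensor (f i) * Pl f μ l = μ i • Pl f μ l := by
  induction l with
  | nil => simp at hil
  | cons j t ih =>
    rw [Pl_cons, ← mul_assoc]
    rcases List.mem_cons.mp hil with rfl | hit
    · rw [M_mul_Pm_self hμ i, Matrix.smul_mul]
    · rw [(M_commute_Pm hcomm i j).eq, mul_assoc, ih hit, Matrix.mul_smul]

lemma Pl_mulVec_eigen (hμ : ∀ i, μ i = 1 ∨ μ i = -1)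
    (x : (Fin n → Fin 2) → ℂ) (hx : ∀ i, (pauliTensor (f i)).mulVec x = μ i • x)
    (l : List (Fin k)) : (Pl f μ l).mulVec x = x := by
  induction l with
  | nil => rw [Pl_nil, Matrix.one_mulVec]
  | cons i t ih =>
    rw [Pl_cons, ← Matrix.mulVec_mulVec, ih]
    have hμ2 : μ i * μ i = 1 := by rcases hμ i with h | h <;> rw [h] <;> ring
    unfold Pm
    rw [Matrix.smul_mulVec, Matrix.add_mulVec, Matrix.one_mulVec,
      Matrix.smul_mulVec, hx i, smul_smul, hμ2, one_smul]
    rw [smul_add]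
    ext s
    simp
    ring

end Algebra

/-- Dimension of a quantum stabilizer code: for `k` linearly independent,
pairwise isotropic generators `f₁,…,f_k` and signs `μᵢ = ±1`, the joint
eigenspace `Q = {x | M(fᵢ)x = μᵢ x}` is a `ℂ`-subspace of dimension
exactly `2^(n-k)`. -/
theorem stabilizer_code_dimension
    (n k : ℕ) (hk : 1 ≤ k) (hkn : k ≤ n)
    (f : Fin k → (Fin n → ZMod 2 × ZMod 2))
    (hind : LinearIndependent (ZMod 2) f)
    (hiso : ∀ i j, ∑ l, ((f i l).1 * (f j l).2 + (f j l).1 * (f i l).2)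
      = (0 : ZMod 2))
    (μ : Fin k → ℂ) (hμ : ∀ i, μ i = 1 ∨ μ i = -1) :
    ∃ Q : Submodule ℂ ((Fin n → Fin 2) → ℂ),
      (Q : Set ((Fin n → Fin 2) → ℂ)) =
        {x | ∀ i, (pauliTensor (f i)).mulVec x = μ i • x} ∧
      Module.finrank ℂ Q = 2 ^ (n - k) := by
  classical
  have hcomm : ∀ i j, pauliTensor (f i) * pauliTensor (f j)
      = pauliTensor (f j) * pauliTensor (f i) := fun i j =>
    pauliTensor_comm (f i) (f j) (hiso i j)
  set P : Matrix (Fin n → Fin 2) (Fin n → Fin 2) ℂ := Pl f μ (List.finRange k) with hP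
  set p : ((Fin n → Fin 2) → ℂ) →ₗ[ℂ] ((Fin n → Fin 2) → ℂ) := P.mulVecLin with hp
  have hPP : P * P = P := Pl_idem hcomm hμ _
  refine ⟨LinearMap.range p, ?_, ?_⟩
  · ext x
    simp only [SetLike.mem_coe, LinearMap.mem_range, Set.mem_setOf_eq]
    constructor
    · rintro ⟨y, rfl⟩
      intro i
      have hiP : pauliTensor (f i) * P = μ i • P :=
        M_mul_Pl hcomm hμ i _ (List.mem_finRange i)
      rw [hp, Matrix.mulVecLin_apply, Matrix.mulVec_mulVec, hiP,
        Matrix.smul_mulVec]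
    · intro hx
      exact ⟨x, by rw [hp, Matrix.mulVecLin_apply, Pl_mulVec_eigen hμ x hx]⟩
  · have hproj : LinearMap.IsProj (LinearMap.range p) p := by
      constructor
      · intro x; exact ⟨x, rfl⟩
      · rintro x ⟨y, rfl⟩
        show p (p y) = p y
        have : p ∘ₗ p = p := by
          rw [hp, ← Matrix.mulVecLin_mul, hPP]
        exact DFunLike.congr_fun this y
    have htr := hproj.trace
    have htrP : LinearMap.trace ℂ _ p = P.trace := by
      rw [LinearMap.trace_eq_matrix_trace ℂ (Pi.basisFun ℂ (Fin n → Fin 2)) p,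
        LinearMap.toMatrix_eq_toMatrix']
      congr 1
      exact LinearMap.toMatrix'_toLin' P
    have htrval : P.trace = (2:ℂ)^(n - k) := by
      rw [hP, traceB f μ hind _ (List.nodup_finRange k), List.length_finRange]
      rw [eq_comm, eq_div_iff (pow_ne_zero _ two_ne_zero), ← pow_add, Nat.sub_add_cancel hkn]
    have : ((Module.finrank ℂ (LinearMap.range p) : ℂ)) = ((2:ℂ))^(n-k) := by
      rw [← htr, htrP, htrval]
    exact_mod_cast this
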